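/- Let λ : Fin 4 → (ZMod 2)² be given by λ₁ = λ₃ = (1,0) and λ₂ = λ₄ = (0,1), and call (i,j) adjacent if (i,j) ∈ {(1,2),(2,3),(3,4),(4,1)}. Let G be the presented group with generators β_{i,g} for i ∈ Fin 4 and g ∈ (ZMod 2)², and relators: β_{i,g}·β_{i,g+λᵢ} for all i and g; β_{i,g}·β_{j,g+λᵢ}·β_{i,g+λⱼ}⁻¹·β_{j,g}⁻¹ for all adjacent pairs (i,j) and all g; and β_{1,g} and β_{2,g} for all g. Then G is isomorphic to ℤ × ℤ. -/

import Mathlib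

/-- The coloring `λ` of the four edges of the square: `λ₁ = λ₃ = (1,0)`, `λ₂ = λ₄ = (0,1)`
(indexed by `Fin 4`, so index `0` is `λ₁`, etc.). -/
def lam : Fin 4 → ZMod 2 × ZMod 2 := ![(1, 0), (0, 1), (1, 0), (0, 1)]

/-- `(i, j)` is an *adjacent* pair of edge indices if it is one of
`(1,2), (2,3), (3,4), (4,1)` (in `Fin 4` indexing: `(0,1), (1,2), (2,3), (3,0)`). -/
def Adj (i j : Fin 4) : Prop := (i.val + 1) % 4 = j.val

/-- The relator set of the paper's presentation of `π₁(M_F, p₀)`: generators `β_{i,g}` for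
`i ∈ Fin 4`, `g ∈ (ZMod 2)²`, and relators `β_{i,g}·β_{i,g+λᵢ}`,
`β_{i,g}·β_{j,g+λᵢ}·β_{i,g+λⱼ}⁻¹·β_{j,g}⁻¹` for adjacent `(i,j)`, and `β_{1,g}`, `β_{2,g}`. -/
def rels : Set (FreeGroup (Fin 4 × (ZMod 2 × ZMod 2))) :=
  {r | (∃ i g, r = FreeGroup.of (i, g) * FreeGroup.of (i, g + lam i)) ∨
       (∃ i j g, Adj i j ∧
          r = FreeGroup.of (i, g) * FreeGroup.of (j, g + lam i) *
              (FreeGroup.of (i, g + lam j))⁻¹ * (FreeGroup.of (j, g))⁻¹) ∨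
       (∃ g, r = FreeGroup.of (0, g) ∨ r = FreeGroup.of (1, g))}

/-- The presented group `G` with generators `β_{i,g}` and the relators `rels`. -/
abbrev G : Type := PresentedGroup rels

namespace Stmt13Aux

def e : ZMod 2 → ℤ := fun g => if g = 0 then 1 else -1

def F : Fin 4 × (ZMod 2 × ZMod 2) → Multiplicative (ℤ × ℤ) :=
  fun p =>
    if p.1 = 2 then Multiplicative.ofAdd (e p.2.1, 0)
    else if p.1 = 3 then Multiplicative.ofAdd (0, e p.2.2)
    else 1

lemma F_rels : ∀ r ∈ rels, FreeGroup.lift F r = 1 := by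
  rintro r (⟨i, g, rfl⟩ | ⟨i, j, g, hadj, rfl⟩ | ⟨g, rfl | rfl⟩)
  · simp only [map_mul, FreeGroup.lift_apply_of]
    obtain ⟨a, b⟩ := g
    fin_cases i <;> revert a b <;> decide
  · simp only [map_mul, map_inv, FreeGroup.lift_apply_of]
    obtain ⟨a, b⟩ := g
    fin_cases i <;> fin_cases j <;> simp_all [Adj] <;> revert a b <;> decide
  · simp [F]
  · simp [F]

noncomputable def phi : G →* Multiplicative (ℤ × ℤ) := PresentedGroup.toGroup F_rels

lemma rel_one {r} (hr : r ∈ rels) : (QuotientGroup.mk r : G) = 1 :=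
  (QuotientGroup.eq_one_iff r).mpr (Subgroup.subset_normalClosure hr)

lemma of_mk (x : Fin 4 × (ZMod 2 × ZMod 2)) :
    (PresentedGroup.of x : G) = QuotientGroup.mk (FreeGroup.of x) := rfl

lemma rel1 (i : Fin 4) (g : ZMod 2 × ZMod 2) :
    (PresentedGroup.of (i, g) : G) * PresentedGroup.of (i, g + lam i) = 1 := by
  rw [of_mk, of_mk]
  exact rel_one (Or.inl ⟨i, g, rfl⟩)

lemma rel2 (i j : Fin 4) (g : ZMod 2 × ZMod 2) (h : Adj i j) :
    (PresentedGroup.of (i, g) : G) * PresentedGroup.of (j, g + lam i) *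
      (PresentedGroup.of (i, g + lam j))⁻¹ * (PresentedGroup.of (j, g))⁻¹ = 1 := by
  simp only [of_mk, ← QuotientGroup.mk_inv, ← QuotientGroup.mk_mul]
  exact rel_one (Or.inr (Or.inl ⟨i, j, g, h, rfl⟩))

lemma of0 (g : ZMod 2 × ZMod 2) : (PresentedGroup.of (0, g) : G) = 1 :=
  rel_one (Or.inr (Or.inr ⟨g, Or.inl rfl⟩))

lemma of1 (g : ZMod 2 × ZMod 2) : (PresentedGroup.of (1, g) : G) = 1 :=
  rel_one (Or.inr (Or.inr ⟨g, Or.inr rfl⟩))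

noncomputable def A : G := PresentedGroup.of (2, (0, 0))
noncomputable def B : G := PresentedGroup.of (3, (0, 0))

lemma of2_10 : (PresentedGroup.of (2, ((1:ZMod 2), (0:ZMod 2))) : G) = A⁻¹ := by
  have h := rel1 2 (0, 0)
  have hl : ((0:ZMod 2), (0:ZMod 2)) + lam 2 = (1, 0) := by decide
  rw [hl] at h
  exact (inv_eq_of_mul_eq_one_right h).symm

lemma of2_snd (g : ZMod 2 × ZMod 2) :
    (PresentedGroup.of (2, g + (0, 1)) : G) = PresentedGroup.of (2, g) := by
  have h := rel2 1 2 g (by unfold Adj; decide)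
  rw [of1, of1] at h
  have hl : lam 1 = ((0:ZMod 2), (1:ZMod 2)) := by decide
  rw [hl] at h
  simp only [one_mul, inv_one, mul_one] at h
  exact mul_inv_eq_one.mp h

lemma of2 (a b : ZMod 2) : (PresentedGroup.of (2, (a, b)) : G) = A ^ e a := by
  have hz : ∀ c : ZMod 2, c = 0 ∨ c = 1 := by decide
  rcases hz a with rfl | rfl <;> rcases hz b with rfl | rfl
  · simp [e, A]
  · have := of2_snd (0, 0)
    have hl : ((0:ZMod 2), (0:ZMod 2)) + (0, 1) = (0, 1) := by decide
    rw [hl] at this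
    rw [this]; simp [e, A]
  · rw [of2_10]; simp [e]
  · have := of2_snd (1, 0)
    have hl : ((1:ZMod 2), (0:ZMod 2)) + (0, 1) = (1, 1) := by decide
    rw [hl] at this
    rw [this, of2_10]; simp [e]

lemma of3_01 : (PresentedGroup.of (3, ((0:ZMod 2), (1:ZMod 2))) : G) = B⁻¹ := by
  have h := rel1 3 (0, 0)
  have hl : ((0:ZMod 2), (0:ZMod 2)) + lam 3 = (0, 1) := by decide
  rw [hl] at h
  exact (inv_eq_of_mul_eq_one_right h).symm

lemma of3_fst (g : ZMod 2 × ZMod 2) :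
    (PresentedGroup.of (3, g + (1, 0)) : G) = PresentedGroup.of (3, g) := by
  have h := rel2 3 0 g (by unfold Adj; decide)
  rw [of0, of0] at h
  have hl : lam 0 = ((1:ZMod 2), (0:ZMod 2)) := by decide
  rw [hl] at h
  simp only [one_mul, inv_one, mul_one] at h
  exact (mul_inv_eq_one.mp h).symm

lemma of3 (a b : ZMod 2) : (PresentedGroup.of (3, (a, b)) : G) = B ^ e b := by
  have hz : ∀ c : ZMod 2, c = 0 ∨ c = 1 := by decide
  rcases hz a with rfl | rfl <;> rcases hz b with rfl | rfl
  · simp [e, B]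
  · rw [of3_01]; simp [e]
  · have := of3_fst (0, 0)
    have hl : ((0:ZMod 2), (0:ZMod 2)) + (1, 0) = (1, 0) := by decide
    rw [hl] at this
    rw [this]; simp [e, B]
  · have := of3_fst (0, 1)
    have hl : ((0:ZMod 2), (1:ZMod 2)) + (1, 0) = (1, 1) := by decide
    rw [hl] at this
    rw [this, of3_01]; simp [e]

lemma hAB : Commute A B := by
  have h := rel2 2 3 (0, 0) (by unfold Adj; decide)
  have h2 : ((0:ZMod 2), (0:ZMod 2)) + lam 2 = (1, 0) := by decide
  have h3 : ((0:ZMod 2), (0:ZMod 2)) + lam 3 = (0, 1) := by decide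
  rw [h2, h3, of3 1 0, of2 0 1] at h
  simp only [e, if_pos rfl, zpow_one] at h
  rw [mul_inv_eq_one, mul_inv_eq_iff_eq_mul] at h
  exact h

noncomputable def psi : Multiplicative (ℤ × ℤ) →* G where
  toFun z := A ^ (Multiplicative.toAdd z).1 * B ^ (Multiplicative.toAdd z).2
  map_one' := by simp
  map_mul' x y := by
    simp only [toAdd_mul, Prod.fst_add, Prod.snd_add, zpow_add]
    exact (hAB.zpow_zpow _ _).mul_mul_mul_comm _ _

lemma comp_eq_id : psi.comp phi = MonoidHom.id G := by
  apply PresentedGroup.ext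
  rintro ⟨i, a, b⟩
  have hz : ∀ c : ZMod 2, c = 0 ∨ c = 1 := by decide
  simp only [MonoidHom.comp_apply, MonoidHom.id_apply, phi, PresentedGroup.toGroup.of]
  fin_cases i
  · show psi (F (0, (a, b))) = PresentedGroup.of (0, (a, b))
    rw [of0]; simp [F, psi]
  · show psi (F (1, (a, b))) = PresentedGroup.of (1, (a, b))
    rw [of1]; simp [F, psi]
  · show psi (F (2, (a, b))) = PresentedGroup.of (2, (a, b))
    rw [of2 a b]
    show psi (Multiplicative.ofAdd (e a, 0)) = _
    simp [psi]
  · show psi (F (3, (a, b))) = PresentedGroup.of (3, (a, b))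
    rw [of3 a b]
    show psi (Multiplicative.ofAdd (0, e b)) = _
    simp [psi]

lemma phi_psi (z : Multiplicative (ℤ × ℤ)) : phi (psi z) = z := by
  have hA : phi A = Multiplicative.ofAdd ((1 : ℤ), (0 : ℤ)) := by
    simp [phi, A, PresentedGroup.toGroup.of, F, e]
  have hB : phi B = Multiplicative.ofAdd ((0 : ℤ), (1 : ℤ)) := by
    simp [phi, B, PresentedGroup.toGroup.of, F, e]
  show phi (A ^ (Multiplicative.toAdd z).1 * B ^ (Multiplicative.toAdd z).2) = z
  rw [map_mul, map_zpow, map_zpow, hA, hB]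
  apply Multiplicative.toAdd.injective
  simp [Prod.ext_iff]

end Stmt13Aux

/-- The presented group `G` (the paper's presentation of `π₁(M_F, p₀)` for the coloring
`(e₁, e₂, e₁, e₂)`) is isomorphic to `ℤ × ℤ`. -/
theorem stmt13 : Nonempty (G ≃* Multiplicative (ℤ × ℤ)) := by
  exact ⟨{ toFun := Stmt13Aux.phi
           invFun := Stmt13Aux.psi
           left_inv := fun x => DFunLike.congr_fun Stmt13Aux.comp_eq_id x
           right_inv := Stmt13Aux.phi_psi
           map_mul' := map_mul Stmt13Aux.phi }⟩
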